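/- The quadrilateral formed from a right isosceles triangle by adding a vertex at the midpoint of its hypotenuse minimizes the longest edge-length among unit-area quadrilaterals having an interior angle equal to π. -/

import Mathlib

open Finset

noncomputable section

abbrev Pt : Type := EuclideanSpace ℝ (Fin 2)

def cross2 (p q : Pt) : ℝ := p 0 * q 1 - p 1 * q 0

def perimeter {n : ℕ} [NeZero n] (v : Fin n → Pt) : ℝ :=
  ∑ i, dist (v i) (v (i + 1))

def shoelace {n : ℕ} [NeZero n] (v : Fin n → Pt) : ℝ :=
  (∑ i, (v i 0 * v (i + 1) 1 - v (i + 1) 0 * v i 1)) / 2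

def polyArea {n : ℕ} [NeZero n] (v : Fin n → Pt) : ℝ := |shoelace v|

def IsSimplePolygon {n : ℕ} [NeZero n] (v : Fin n → Pt) : Prop :=
  Function.Injective v ∧
  (∀ i : Fin n,
    segment ℝ (v i) (v (i + 1)) ∩ segment ℝ (v (i + 1)) (v (i + 1 + 1)) = {v (i + 1)}) ∧
  (∀ i j : Fin n, j ≠ i → j ≠ i + 1 → j + 1 ≠ i →
    segment ℝ (v i) (v (i + 1)) ∩ segment ℝ (v j) (v (j + 1)) = ∅)

/-- A simple, positively (counterclockwise) oriented polygon. -/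
def IsPolygon {n : ℕ} [NeZero n] (v : Fin n → Pt) : Prop :=
  IsSimplePolygon v ∧ 0 < shoelace v

/-- Interior angle at vertex `i` of a positively oriented simple polygon:
the unoriented angle at a convex (left-turn) vertex, and its reflex complement
at a right-turn vertex. -/
def interiorAngle {n : ℕ} [NeZero n] (v : Fin n → Pt) (i : Fin n) : ℝ :=
  if 0 ≤ cross2 (v i - v (i - 1)) (v (i + 1) - v i) then
    EuclideanGeometry.angle (v (i - 1)) (v i) (v (i + 1))
  else 2 * Real.pi - EuclideanGeometry.angle (v (i - 1)) (v i) (v (i + 1))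

def IsConvexPolygon {n : ℕ} [NeZero n] (v : Fin n → Pt) : Prop :=
  IsPolygon v ∧ ∀ i, interiorAngle v i ≤ Real.pi

/-- The polygon is circumscribed about a circle: every edge is tangent to a
common circle of radius `r` centered at `c`. -/
def IsCircumscribed {n : ℕ} [NeZero n] (v : Fin n → Pt) : Prop :=
  ∃ c : Pt, ∃ r : ℝ, 0 < r ∧
    ∀ i : Fin n, Metric.infDist c (segment ℝ (v i) (v (i + 1))) = r

/-- The polygon is inscribed in a circle: all vertices lie on a common circle. -/
def IsInscribed {n : ℕ} [NeZero n] (v : Fin n → Pt) : Prop :=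
  ∃ c : Pt, ∃ r : ℝ, ∀ i : Fin n, dist c (v i) = r

def longestEdge {n : ℕ} [NeZero n] (v : Fin n → Pt) : ℝ :=
  Finset.univ.sup' Finset.univ_nonempty (fun i => dist (v i) (v (i + 1)))

/-! ### Auxiliary lemmas -/

lemma seg_coord {a b x : Pt} (h : x ∈ segment ℝ a b) :
    ∃ u ∈ Set.Icc (0:ℝ) 1, ∀ j, x j = a j + u * (b j - a j) := by
  rw [segment_eq_image'] at h
  obtain ⟨t, ht, rfl⟩ := h
  exact ⟨t, ht, fun j => by simp [smul_eq_mul]⟩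

lemma seg_end {a b x : Pt} {u : ℝ} (hux : ∀ j, x j = a j + u * (b j - a j))
    (h : u = 1) : x = b := by
  ext j; rw [hux j, h]; ring

lemma seg_start {a b x : Pt} {u : ℝ} (hux : ∀ j, x j = a j + u * (b j - a j))
    (h : u = 0) : x = a := by
  ext j; rw [hux j, h]; ring

lemma norm_eq_sqrt (x : Pt) : ‖x‖ = Real.sqrt (x 0 ^ 2 + x 1 ^ 2) := by
  rw [EuclideanSpace.norm_eq]; simp [Fin.sum_univ_two, sq_abs]

lemma dist_eq_sqrt (x y : Pt) :
    dist x y = Real.sqrt ((x 0 - y 0) ^ 2 + (x 1 - y 1) ^ 2) := by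
  rw [EuclideanSpace.dist_eq]
  simp [Fin.sum_univ_two, Real.dist_eq, sq_abs]

lemma cross_abs_le (x y : Pt) : |x 0 * y 1 - x 1 * y 0| ≤ ‖x‖ * ‖y‖ := by
  rw [norm_eq_sqrt, norm_eq_sqrt, ← Real.sqrt_mul (by positivity), ← Real.sqrt_sq_eq_abs]
  apply Real.sqrt_le_sqrt
  nlinarith [sq_nonneg (x 0 * y 0 + x 1 * y 1)]

lemma quad_key (a b c d : Pt) (t : ℝ) (hb : ∀ j, b j = a j + t * (c j - a j))
    (h : |(a 0 * b 1 - b 0 * a 1) + (b 0 * c 1 - c 0 * b 1) +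
          (c 0 * d 1 - d 0 * c 1) + (d 0 * a 1 - a 0 * d 1)| = 2) :
    Real.sqrt 2 ≤ max (dist c d) (dist a d) := by
  have key : (c - d) 0 * (a - d) 1 - (c - d) 1 * (a - d) 0
      = -((a 0 * b 1 - b 0 * a 1) + (b 0 * c 1 - c 0 * b 1) +
          (c 0 * d 1 - d 0 * c 1) + (d 0 * a 1 - a 0 * d 1)) := by
    simp only [PiLp.sub_apply, hb 0, hb 1]; ring
  have h2 : (2:ℝ) ≤ ‖c - d‖ * ‖a - d‖ := by
    calc (2:ℝ) = |(c - d) 0 * (a - d) 1 - (c - d) 1 * (a - d) 0| := by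
          rw [key, abs_neg, h]
      _ ≤ _ := cross_abs_le _ _
  have hcd : dist c d = ‖c - d‖ := dist_eq_norm _ _
  have had : dist a d = ‖a - d‖ := dist_eq_norm _ _
  set M := max (dist c d) (dist a d) with hM
  have h0 : 0 ≤ M := le_trans dist_nonneg (le_max_left _ _)
  have hM2 : (2:ℝ) ≤ M ^ 2 := by
    have h1 : ‖c - d‖ ≤ M := hcd ▸ le_max_left _ _
    have h2' : ‖a - d‖ ≤ M := had ▸ le_max_right _ _
    nlinarith [norm_nonneg (c - d), norm_nonneg (a - d)]
  calc Real.sqrt 2 ≤ Real.sqrt (M ^ 2) := Real.sqrt_le_sqrt hM2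
    _ = M := Real.sqrt_sq h0

lemma cyclic_sum (v : Fin 4 → Pt) (i : Fin 4) :
    (∑ j : Fin 4, (v j 0 * v (j + 1) 1 - v (j + 1) 0 * v j 1)) =
    (v (i-1) 0 * v i 1 - v i 0 * v (i-1) 1) + (v i 0 * v (i+1) 1 - v (i+1) 0 * v i 1) +
    (v (i+1) 0 * v (i+2) 1 - v (i+2) 0 * v (i+1) 1) +
    (v (i+2) 0 * v (i-1) 1 - v (i-1) 0 * v (i+2) 1) := by
  fin_cases i <;> (simp [Fin.sum_univ_four, show ((-1:Fin 4)) = 3 from rfl]; ring)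

lemma fin4_add11 : ∀ k : Fin 4, k + 1 + 1 = k + 2 := by decide
lemma fin4_add21 : ∀ k : Fin 4, k + 2 + 1 = k - 1 := by decide

set_option maxHeartbeats 3200000 in
theorem stmt7 :
    ∃ Q : Fin 4 → Pt, IsPolygon Q ∧ polyArea Q = 1 ∧
      -- Q is a right isosceles triangle `Q 0, Q 2, Q 3` (right angle at `Q 3`)
      -- with an extra vertex `Q 1` at the midpoint of the hypotenuse:
      dist (Q 3) (Q 0) = dist (Q 3) (Q 2) ∧
      inner ℝ (Q 0 - Q 3) (Q 2 - Q 3) = (0 : ℝ) ∧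
      Q 1 = midpoint ℝ (Q 0) (Q 2) ∧
      interiorAngle Q 1 = Real.pi ∧
      ∀ v : Fin 4 → Pt, IsPolygon v → polyArea v = 1 →
        (∃ i, interiorAngle v i = Real.pi) → longestEdge Q ≤ longestEdge v := by
  have hs0 : (0:ℝ) < Real.sqrt 2 := Real.sqrt_pos.mpr (by norm_num)
  have hs2 : Real.sqrt 2 ^ 2 = 2 := Real.sq_sqrt (by norm_num)
  set s := Real.sqrt 2 with hsdef
  set Q : Fin 4 → Pt := ![!₂[s, 0], !₂[s/2, s/2], !₂[0, s], !₂[0, 0]] with hQ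
  have hsl : shoelace Q = 1 := by
    simp [shoelace, Fin.sum_univ_four, hQ]; nlinarith [hs2]
  have hmid : Q 1 = midpoint ℝ (Q 0) (Q 2) := by
    ext j
    fin_cases j <;>
      simp [hQ, midpoint_eq_smul_add, PiLp.smul_apply, PiLp.add_apply, smul_eq_mul] <;> ring
  have hne02 : Q 0 ≠ Q 2 := by
    intro h
    have h0 := congrArg (fun p : Pt => p 0) h
    simp [hQ] at h0
    nlinarith [hs0]
  refine ⟨Q, ⟨⟨?_, ?_, ?_⟩, ?_⟩, ?_, ?_, ?_, hmid, ?_, ?_⟩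
  · -- injective
    intro x y hxy
    fin_cases x <;> fin_cases y <;>
      first
        | rfl
        | ((exfalso
            have h0 := congrArg (fun p : Pt => p 0) hxy
            have h1 := congrArg (fun p : Pt => p 1) hxy
            simp [hQ] at h0 h1) <;> nlinarith [hs0])
  · -- adjacent edges meet only in the shared vertex
    intro i
    fin_cases i
    · show segment ℝ (Q 0) (Q 1) ∩ segment ℝ (Q 1) (Q 2) = {Q 1}
      ext x
      simp only [Set.mem_inter_iff, Set.mem_singleton_iff]
      constructor
      · rintro ⟨h1, h2⟩
        obtain ⟨u, hu, hux⟩ := seg_coord h1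
        obtain ⟨w, hw, hwx⟩ := seg_coord h2
        have e := hux 1; have f := hwx 1
        simp [hQ] at e f
        exact seg_end hux (le_antisymm hu.2 (by nlinarith [hw.1, hs0]))
      · rintro rfl
        exact ⟨right_mem_segment ℝ _ _, left_mem_segment ℝ _ _⟩
    · show segment ℝ (Q 1) (Q 2) ∩ segment ℝ (Q 2) (Q 3) = {Q 2}
      ext x
      simp only [Set.mem_inter_iff, Set.mem_singleton_iff]
      constructor
      · rintro ⟨h1, h2⟩
        obtain ⟨u, hu, hux⟩ := seg_coord h1
        obtain ⟨w, hw, hwx⟩ := seg_coord h2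
        have e := hux 0; have f := hwx 0
        simp [hQ] at e f
        exact seg_end hux (le_antisymm hu.2 (by nlinarith [hs0]))
      · rintro rfl
        exact ⟨right_mem_segment ℝ _ _, left_mem_segment ℝ _ _⟩
    · show segment ℝ (Q 2) (Q 3) ∩ segment ℝ (Q 3) (Q 0) = {Q 3}
      ext x
      simp only [Set.mem_inter_iff, Set.mem_singleton_iff]
      constructor
      · rintro ⟨h1, h2⟩
        obtain ⟨u, hu, hux⟩ := seg_coord h1
        obtain ⟨w, hw, hwx⟩ := seg_coord h2
        have e := hux 0; have f := hwx 0
        simp [hQ] at e f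
        exact seg_start hwx (le_antisymm (by nlinarith [hs0]) hw.1)
      · rintro rfl
        exact ⟨right_mem_segment ℝ _ _, left_mem_segment ℝ _ _⟩
    · show segment ℝ (Q 3) (Q 0) ∩ segment ℝ (Q 0) (Q 1) = {Q 0}
      ext x
      simp only [Set.mem_inter_iff, Set.mem_singleton_iff]
      constructor
      · rintro ⟨h1, h2⟩
        obtain ⟨u, hu, hux⟩ := seg_coord h1
        obtain ⟨w, hw, hwx⟩ := seg_coord h2
        have e := hux 1; have f := hwx 1
        simp [hQ] at e f
        exact seg_start hwx (le_antisymm (by nlinarith [hs0]) hw.1)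
      · rintro rfl
        exact ⟨right_mem_segment ℝ _ _, left_mem_segment ℝ _ _⟩
  · -- non-adjacent edges are disjoint
    intro i j h1 h2 h3
    have hj : j = i + 2 := by revert h1 h2 h3; revert i j; decide
    subst hj
    rw [Set.eq_empty_iff_forall_notMem]
    rintro x ⟨hx1, hx2⟩
    obtain ⟨u, hu, hux⟩ := seg_coord hx1
    obtain ⟨w, hw, hwx⟩ := seg_coord hx2
    fin_cases i
    · have e := hux 0; have f := hwx 0
      simp [hQ] at e f
      nlinarith [hu.2, hs0]
    · have e := hux 1; have f := hwx 1
      simp [hQ] at e f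
      nlinarith [hu.1, hs0]
    · have e := hux 0; have f := hwx 0
      simp [hQ] at e f
      nlinarith [hw.2, hs0]
    · have e := hux 1; have f := hwx 1
      simp [hQ] at e f
      nlinarith [hw.1, hs0]
  · -- positive orientation
    rw [hsl]; norm_num
  · -- area 1
    rw [polyArea, hsl]; norm_num
  · -- isosceles
    rw [dist_eq_sqrt, dist_eq_sqrt]
    simp [hQ]
  · -- right angle
    simp [hQ, PiLp.inner_apply, Fin.sum_univ_two, PiLp.sub_apply]
  · -- interior angle π at vertex 1
    rw [interiorAngle, if_pos]
    · show EuclideanGeometry.angle (Q (1 - 1)) (Q 1) (Q (1 + 1)) = Real.pi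
      have e1 : (1:Fin 4) - 1 = 0 := rfl
      have e2 : (1:Fin 4) + 1 = 2 := rfl
      rw [e1, e2, hmid]
      exact EuclideanGeometry.angle_midpoint_eq_pi _ _ hne02
    · have e1 : (1:Fin 4) - 1 = 0 := rfl
      have e2 : (1:Fin 4) + 1 = 2 := rfl
      rw [e1, e2]
      have : cross2 (Q 1 - Q 0) (Q 2 - Q 1) = 0 := by
        simp [cross2, hQ, PiLp.sub_apply]; ring
      rw [this]
  · -- minimality
    intro v hv hA hex
    obtain ⟨i, hi⟩ := hex
    -- longestEdge Q = s
    have d01 : dist (Q 0) (Q 1) = 1 := by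
      rw [dist_eq_sqrt,
        show (Q 0 0 - Q 1 0) ^ 2 + (Q 0 1 - Q 1 1) ^ 2 = 1 by simp [hQ]; nlinarith [hs2]]
      exact Real.sqrt_one
    have d12 : dist (Q 1) (Q 2) = 1 := by
      rw [dist_eq_sqrt,
        show (Q 1 0 - Q 2 0) ^ 2 + (Q 1 1 - Q 2 1) ^ 2 = 1 by simp [hQ]; nlinarith [hs2]]
      exact Real.sqrt_one
    have d23 : dist (Q 2) (Q 3) = s := by
      rw [dist_eq_sqrt,
        show (Q 2 0 - Q 3 0) ^ 2 + (Q 2 1 - Q 3 1) ^ 2 = s ^ 2 by simp [hQ]]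
      exact Real.sqrt_sq hs0.le
    have d30 : dist (Q 3) (Q 0) = s := by
      rw [dist_eq_sqrt,
        show (Q 3 0 - Q 0 0) ^ 2 + (Q 3 1 - Q 0 1) ^ 2 = s ^ 2 by simp [hQ]]
      exact Real.sqrt_sq hs0.le
    have hs1 : (1:ℝ) ≤ s := by nlinarith [hs0, hs2]
    have hQL : longestEdge Q = s := by
      rw [longestEdge]
      apply le_antisymm
      · apply Finset.sup'_le
        intro k _
        fin_cases k
        · show dist (Q 0) (Q (0 + 1)) ≤ s
          rw [show (0:Fin 4) + 1 = 1 from rfl, d01]; exact hs1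
        · show dist (Q 1) (Q (1 + 1)) ≤ s
          rw [show (1:Fin 4) + 1 = 2 from rfl, d12]; exact hs1
        · show dist (Q 2) (Q (2 + 1)) ≤ s
          rw [show (2:Fin 4) + 1 = 3 from rfl, d23]
        · show dist (Q 3) (Q (3 + 1)) ≤ s
          rw [show (3:Fin 4) + 1 = 0 from rfl, d30]
      · have := Finset.le_sup' (fun k : Fin 4 => dist (Q k) (Q (k + 1)))
          (Finset.mem_univ (2 : Fin 4))
        rw [show (2:Fin 4) + 1 = 3 from rfl, d23] at this
        exact this
    rw [hQL]
    -- angle at i is π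
    have hangle : EuclideanGeometry.angle (v (i - 1)) (v i) (v (i + 1)) = Real.pi := by
      rw [interiorAngle] at hi
      split_ifs at hi with hcr
      · exact hi
      · linarith
    have hsb := EuclideanGeometry.angle_eq_pi_iff_sbtw.mp hangle
    have hmem : v i ∈ segment ℝ (v (i - 1)) (v (i + 1)) := hsb.wbtw.mem_segment
    rw [segment_eq_image'] at hmem
    obtain ⟨t, ht, hb⟩ := hmem
    have hb' : ∀ j : Fin 2, v i j = v (i - 1) j + t * (v (i + 1) j - v (i - 1) j) := by
      intro j; rw [← hb]; simp [smul_eq_mul]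
    have hS : |(v (i-1) 0 * v i 1 - v i 0 * v (i-1) 1) + (v i 0 * v (i+1) 1 - v (i+1) 0 * v i 1) +
        (v (i+1) 0 * v (i+2) 1 - v (i+2) 0 * v (i+1) 1) +
        (v (i+2) 0 * v (i-1) 1 - v (i-1) 0 * v (i+2) 1)| = 2 := by
      have h := hA
      rw [polyArea, shoelace, abs_div] at h
      rw [cyclic_sum v i] at h
      rw [show |(2:ℝ)| = 2 from abs_two] at h
      linarith
    have hmax := quad_key (v (i - 1)) (v i) (v (i + 1)) (v (i + 2)) t hb' hS
    have h1 : dist (v (i + 1)) (v (i + 2)) ≤ longestEdge v := by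
      have := Finset.le_sup' (fun k : Fin 4 => dist (v k) (v (k + 1)))
        (Finset.mem_univ (i + 1))
      rw [fin4_add11 i] at this
      exact this
    have h2 : dist (v (i - 1)) (v (i + 2)) ≤ longestEdge v := by
      have := Finset.le_sup' (fun k : Fin 4 => dist (v k) (v (k + 1)))
        (Finset.mem_univ (i + 2))
      rw [fin4_add21 i] at this
      rw [dist_comm]
      exact this
    calc s ≤ max (dist (v (i + 1)) (v (i + 2))) (dist (v (i - 1)) (v (i + 2))) := hmax
      _ ≤ longestEdge v := max_le h1 h2

end
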